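/- With gcd(m,q)=1, every QC code C ⊆ R^ℓ of index ℓ decomposes under the CRT isomorphism R^ℓ ≅ E_1^ℓ ⊕ ⋯ ⊕ E_s^ℓ as C ≅ C_1 ⊕ ⋯ ⊕ C_s, where each constituent C_i is a linear code of length ℓ over the field E_i; moreover, if C is generated as an R-module by vectors (a_{b,0}(x),…,a_{b,ℓ−1}(x)), 1 ≤ b ≤ r, then C_i is the E_i-span of the vectors (a_{b,0}(ξ^{u_i}),…,a_{b,ℓ−1}(ξ^{u_i})). -/

import Mathlib

set_option maxHeartbeats 1000000

open Polynomial

/-- The natural reduction map `F[x]/⟨f₁⟩ → F[x]/⟨f₂⟩` when `f₂ ∣ f₁`. -/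
noncomputable def projMod {F : Type*} [Field F] (f₁ f₂ : Polynomial F) (h : f₂ ∣ f₁) :
    AdjoinRoot f₁ →+* AdjoinRoot f₂ :=
  AdjoinRoot.lift (AdjoinRoot.of f₂) (AdjoinRoot.root f₂) (by
    have h0 : (AdjoinRoot.mk f₂) f₁ = 0 := AdjoinRoot.mk_eq_zero.mpr h
    rwa [← AdjoinRoot.aeval_eq, Polynomial.aeval_def] at h0)

lemma projMod_mk {F : Type*} [Field F] (f₁ f₂ : Polynomial F) (h : f₂ ∣ f₁)
    (p : Polynomial F) :
    projMod f₁ f₂ h (AdjoinRoot.mk f₁ p) = AdjoinRoot.mk f₂ p := by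
  rw [projMod]
  refine (AdjoinRoot.lift_mk _ p).trans ?_
  rw [← AdjoinRoot.algebraMap_eq, ← Polynomial.aeval_def,
    AdjoinRoot.aeval_eq]

/-- The single-coordinate CRT map is bijective. -/
lemma crt_bij {F : Type*} [Field F] {s : ℕ} (f : Fin s → Polynomial F) (g : Polynomial F)
    (hcop : ∀ i j, i ≠ j → IsCoprime (f i) (f j)) (hprod : ∏ i, f i = g)
    (hdvd : ∀ i, f i ∣ g) :
    Function.Bijective (fun (x : AdjoinRoot g) (i : Fin s) => projMod g (f i) (hdvd i) x) := by
  constructor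
  · intro x y hxy
    obtain ⟨p, rfl⟩ := AdjoinRoot.mk_surjective x
    obtain ⟨q, rfl⟩ := AdjoinRoot.mk_surjective y
    rw [AdjoinRoot.mk_eq_mk, ← hprod]
    apply Finset.prod_dvd_of_coprime
    · intro i _ j _ hij; exact hcop i j hij
    · intro i _
      have h1 := congrFun hxy i
      simp only [projMod_mk] at h1
      exact AdjoinRoot.mk_eq_mk.mp h1
  · intro y
    choose p hp using fun i => AdjoinRoot.mk_surjective (y i)
    have key : ∀ i : Fin s, ∃ e : Polynomial F, AdjoinRoot.mk (f i) e = 1 ∧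
        ∀ j, j ≠ i → AdjoinRoot.mk (f j) e = 0 := by
      intro i
      have hc : IsCoprime (f i) (∏ j ∈ Finset.univ.erase i, f j) :=
        IsCoprime.prod_right fun j hj => hcop i j (Ne.symm (Finset.ne_of_mem_erase hj))
      obtain ⟨u, v, huv⟩ := hc
      refine ⟨v * ∏ j ∈ Finset.univ.erase i, f j, ?_, ?_⟩
      · have h1 : AdjoinRoot.mk (f i)
            (u * f i + v * ∏ j ∈ Finset.univ.erase i, f j) = 1 := by rw [huv]; simp
        simpa [map_add, map_mul, AdjoinRoot.mk_self] using h1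
      · intro j hj
        rw [AdjoinRoot.mk_eq_zero]
        exact Dvd.dvd.mul_left
          (Finset.dvd_prod_of_mem f (Finset.mem_erase.mpr ⟨hj, Finset.mem_univ j⟩)) v
    choose e he1 he0 using key
    refine ⟨AdjoinRoot.mk g (∑ i, p i * e i), ?_⟩
    funext i
    simp only [projMod_mk, map_sum, map_mul]
    rw [Finset.sum_eq_single i]
    · rw [he1, mul_one, hp]
    · intro b _ hbi
      rw [he0 b i (Ne.symm hbi), mul_zero]
    · intro h; exact absurd (Finset.mem_univ i) h

theorem stmt5 (F : Type*) [Field F] [Fintype F] (m ℓ s r : ℕ) (hm : 0 < m)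
    -- gcd(m, q) = 1
    (hmq : (m : F) ≠ 0)
    -- factorization of x^m − 1 into distinct monic irreducible polynomials
    (f : Fin s → Polynomial F)
    (hirr : ∀ i, Irreducible (f i)) (hmonic : ∀ i, (f i).Monic)
    (hdist : ∀ i j, i ≠ j → f i ≠ f j)
    (hprod : ∏ i, f i = X ^ m - C 1)
    (hdvd : ∀ i, f i ∣ X ^ m - C 1)
    -- generators of the QC code C ⊆ R^ℓ as an R-module
    (a : Fin r → Fin ℓ → Polynomial F) :
    -- the CRT map R^ℓ → E_1^ℓ ⊕ ⋯ ⊕ E_s^ℓ is bijective, and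
    Function.Bijective
      (fun (v : Fin ℓ → AdjoinRoot (X ^ m - C 1 : Polynomial F)) =>
        fun (i : Fin s) (j : Fin ℓ) => projMod _ (f i) (hdvd i) (v j)) ∧
    -- under it, C decomposes into its constituents: v ∈ C iff each component lies in
    -- C_i, where C_i is the E_i-span of the reductions of the generators of C
    (∀ v : Fin ℓ → AdjoinRoot (X ^ m - C 1 : Polynomial F),
      v ∈ Submodule.span (AdjoinRoot (X ^ m - C 1 : Polynomial F))
          (Set.range fun b : Fin r =>
            fun j : Fin ℓ => AdjoinRoot.mk (X ^ m - C 1 : Polynomial F) (a b j)) ↔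
      ∀ i : Fin s,
        (fun j : Fin ℓ => projMod _ (f i) (hdvd i) (v j)) ∈
          Submodule.span (AdjoinRoot (f i))
            (Set.range fun b : Fin r => fun j : Fin ℓ => AdjoinRoot.mk (f i) (a b j))) := by
  set g : Polynomial F := X ^ m - C 1 with hg
  have hcop : ∀ i j, i ≠ j → IsCoprime (f i) (f j) := by
    intro i j hij
    rw [(hirr i).coprime_iff_not_dvd]
    intro hdvd'
    exact hdist i j hij (Polynomial.eq_of_monic_of_associated (hmonic i) (hmonic j)
      ((hirr i).associated_of_dvd (hirr j) hdvd'))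
  have hbij := crt_bij f g hcop hprod hdvd
  constructor
  · constructor
    · intro v w h
      funext j
      apply hbij.1
      funext i
      exact congrFun (congrFun h i) j
    · intro y
      choose v hv using fun j => hbij.2 (fun i => y i j)
      exact ⟨v, by funext i j; exact congrFun (hv j) i⟩
  · intro v
    constructor
    · intro h i
      refine Submodule.span_induction ?_ ?_ ?_ ?_ h
      · rintro x ⟨b, rfl⟩
        apply Submodule.subset_span
        exact ⟨b, by funext j; simp [projMod_mk]⟩
      · convert Submodule.zero_mem _ using 1
        funext j; simp
      · intro x y _ _ hx hy
        have := Submodule.add_mem _ hx hy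
        simpa [Pi.add_apply, map_add, Pi.add_def] using this
      · intro c x _ hx
        have := Submodule.smul_mem _ (projMod g (f i) (hdvd i) c) hx
        convert this using 1
        funext j
        simp [Pi.smul_apply, smul_eq_mul, map_mul]; rfl
    · intro hv
      choose d hd using fun i => (Submodule.mem_span_range_iff_exists_fun _).mp (hv i)
      choose c hc using fun b => hbij.2 (fun i => d i b)
      have hveq : v = ∑ b, c b • (fun j => AdjoinRoot.mk g (a b j)) := by
        funext j
        apply hbij.1
        funext i
        have h1 := congrFun (hd i) j
        simp only [Finset.sum_apply, Pi.smul_apply, smul_eq_mul] at h1 ⊢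
        rw [map_sum]
        rw [← h1]
        congr 1
        funext b
        rw [map_mul]
        congr 1
        · exact (congrFun (hc b) i).symm
        · exact (projMod_mk g (f i) (hdvd i) (a b j)).symm
      rw [hveq]
      exact Submodule.sum_mem _ fun b _ =>
        Submodule.smul_mem _ _ (Submodule.subset_span ⟨b, rfl⟩)
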